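/- Let p₁=(ζ₁,v₁) ∈ 𝓗 with p₁ ≠ (0,0), and set K = K(p₁) = (|ζ₁|⁴+|v₁|²)^{1/4}. Define the two centers c₊ = (−ζ₁·(−|ζ₁|²−v₁)^{−1}, v₁/K⁴) and c₋ = (ζ₁·(−|ζ₁|²+v₁)^{−1}, −v₁/K⁴) in 𝓗 (the inverses taken in ℍ). Then every point q ∈ 𝓗 with ρ₀(q, c₊) = 1/K or ρ₀(q, c₋) = 1/K satisfies ρ₀(q, (0,0)) ≤ R₀, where R₀ = (2^{1/4}/K)·((1 − |v₁|/K²)^{1/3} + (1 + |v₁|/K²)^{1/3})^{3/4}. In other words, the Cygan spheres of radius 1/K centered at c₊ and c₋ (the isometric spheres of B and B⁻¹) are contained in the closed Cygan ball of radius R₀ centered at the origin. -/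

import Mathlib

open Quaternion Real

noncomputable section

/-- The Cygan distance on the quaternionic Heisenberg group `𝓗 = ℍ × Im ℍ`:
`ρ₀((ζ₁,v₁),(ζ₂,v₂)) = | |ζ₁−ζ₂|² + v₁−v₂−2·Im(ζ̄₂ζ₁) |^{1/2}`, the outer `|·|`
being the quaternionic norm. -/
def cygan (ζ₁ v₁ ζ₂ v₂ : ℍ) : ℝ :=
  Real.sqrt ‖((‖ζ₁ - ζ₂‖ ^ 2 : ℝ) : ℍ) + v₁ - v₂ - 2 * (star ζ₂ * ζ₁).im‖

/-- The Korányi gauge `K(ζ,v) = (|ζ|⁴+|v|²)^{1/4}`. -/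
def Kor (ζ v : ℍ) : ℝ := (‖ζ‖ ^ 4 + ‖v‖ ^ 2) ^ ((1 : ℝ) / 4)

lemma holder4 (a b A B : ℝ) (ha : 0 ≤ a) (hb : 0 ≤ b) (hA : 0 ≤ A) (hB : 0 ≤ B) :
    (Real.sqrt (a*A) + Real.sqrt (b*B))^4 ≤ (a^((2:ℝ)/3) + b^((2:ℝ)/3))^3 * (A^2 + B^2) := by
  set u := a ^ ((1:ℝ)/6) with hu
  set w := b ^ ((1:ℝ)/6) with hw
  set U := Real.sqrt A with hU
  set W := Real.sqrt B with hW
  have hu0 : 0 ≤ u := Real.rpow_nonneg ha _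
  have hw0 : 0 ≤ w := Real.rpow_nonneg hb _
  have hU0 : 0 ≤ U := Real.sqrt_nonneg _
  have hW0 : 0 ≤ W := Real.sqrt_nonneg _
  have ha23 : a ^ ((2:ℝ)/3) = u^4 := by
    rw [hu, ← Real.rpow_natCast (a ^ ((1:ℝ)/6)) 4, ← Real.rpow_mul ha]
    norm_num
  have hb23 : b ^ ((2:ℝ)/3) = w^4 := by
    rw [hw, ← Real.rpow_natCast (b ^ ((1:ℝ)/6)) 4, ← Real.rpow_mul hb]
    norm_num
  have hsa : Real.sqrt (a*A) = u^3 * U := by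
    rw [Real.sqrt_mul ha, hU, hu, Real.sqrt_eq_rpow, ← Real.rpow_natCast (a ^ ((1:ℝ)/6)) 3,
      ← Real.rpow_mul ha]
    norm_num
  have hsb : Real.sqrt (b*B) = w^3 * W := by
    rw [Real.sqrt_mul hb, hW, hw, Real.sqrt_eq_rpow, ← Real.rpow_natCast (b ^ ((1:ℝ)/6)) 3,
      ← Real.rpow_mul hb]
    norm_num
  have hA2 : A^2 = U^4 := by rw [hU, ← Real.sq_sqrt hA, Real.sqrt_sq hU0]; ring
  have hB2 : B^2 = W^4 := by rw [hW, ← Real.sq_sqrt hB, Real.sqrt_sq hW0]; ring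
  rw [ha23, hb23, hsa, hsb, hA2, hB2]
  have h1 : (u^3*U + w^3*W)^2 ≤ (u^4+w^4) * (u^2*U^2 + w^2*W^2) := by
    nlinarith [sq_nonneg (u^2*w*W - w^2*u*U)]
  have h2 : (u^2*U^2 + w^2*W^2)^2 ≤ (u^4+w^4) * (U^4+W^4) := by
    nlinarith [sq_nonneg (u^2*W^2 - w^2*U^2)]
  have h0 : 0 ≤ u^3*U + w^3*W := by positivity
  have h4 : 0 ≤ u^4 + w^4 := by positivity
  calc (u^3*U + w^3*W)^4 = ((u^3*U + w^3*W)^2)^2 := by ring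
    _ ≤ ((u^4+w^4) * (u^2*U^2 + w^2*W^2))^2 := by
        apply pow_le_pow_left₀ (by positivity) h1
    _ = (u^4+w^4)^2 * (u^2*U^2 + w^2*W^2)^2 := by ring
    _ ≤ (u^4+w^4)^2 * ((u^4+w^4) * (U^4+W^4)) := by
        apply mul_le_mul_of_nonneg_left h2 (by positivity)
    _ = (u^4+w^4)^3 * (U^4+W^4) := by ring

lemma cs2 (c1 c2 e1 e2 : ℝ) : (c1*e1 + c2*e2)^2 ≤ (c1^2+c2^2)*(e1^2+e2^2) := by
  nlinarith [sq_nonneg (c1*e2 - c2*e1)]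

lemma real_core1 (t x v zr zi ia : ℝ)
    (ht0 : 0 ≤ t) (ht1 : t ≤ 1)
    (hx0 : 0 ≤ x) (hv0 : 0 ≤ v)
    (hvt : v^2 + t^2 = 1)
    (hia : 0 ≤ ia) (hia2 : ia^2 = 1 - x^2)
    (hzi : 0 ≤ zi)
    (hcirc : zr^2 + zi^2 = v * (x - v + 2*zr))
    (hP : 0 ≤ x - v + 2*zr) :
    (x - v + 2*zr)^2 + (ia + t + 2*zi)^2 ≤
      2 * ((1-t)^((1:ℝ)/3) + (1+t)^((1:ℝ)/3))^3 := by
  have hx1 : x ≤ 1 := by nlinarith [sq_nonneg ia, hia2, hx0]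
  set a := Real.sqrt (1+t) with hadef
  set b := Real.sqrt (1-t) with hbdef
  set A := Real.sqrt (1+ia) with hAdef
  set B := Real.sqrt (1-ia) with hBdef
  have ha0 : 0 ≤ a := Real.sqrt_nonneg _
  have hb0 : 0 ≤ b := Real.sqrt_nonneg _
  have hA0 : 0 ≤ A := Real.sqrt_nonneg _
  have hB0 : 0 ≤ B := Real.sqrt_nonneg _
  have ha2 : a^2 = 1+t := Real.sq_sqrt (by linarith)
  have hb2 : b^2 = 1-t := Real.sq_sqrt (by linarith)
  have hA2 : A^2 = 1+ia := Real.sq_sqrt (by linarith)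
  have hB2 : B^2 = 1-ia := by
    apply Real.sq_sqrt
    nlinarith [sq_nonneg x]
  have hab : a * b = v := by
    have h1 : (a*b)^2 = v^2 := by rw [mul_pow, ha2, hb2]; linarith
    calc a*b = Real.sqrt ((a*b)^2) := (Real.sqrt_sq (mul_nonneg ha0 hb0)).symm
      _ = Real.sqrt (v^2) := by rw [h1]
      _ = v := Real.sqrt_sq hv0
  have hAB : A * B = x := by
    have h1 : (A*B)^2 = x^2 := by rw [mul_pow, hA2, hB2]; linarith
    calc A*B = Real.sqrt ((A*B)^2) := (Real.sqrt_sq (mul_nonneg hA0 hB0)).symm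
      _ = Real.sqrt (x^2) := by rw [h1]
      _ = x := Real.sqrt_sq hx0
  set N := a*A + b*B with hNdef
  have hN0 : 0 ≤ N := by positivity
  have hN2 : N^2 = 2 + 2*t*ia + 2*x*v := by
    have h : N^2 = a^2*A^2 + b^2*B^2 + 2*(a*b)*(A*B) := by rw [hNdef]; ring
    rw [h, ha2, hb2, hA2, hB2, hab, hAB]; ring
  have hvx0 : 0 ≤ v * x := mul_nonneg hv0 hx0
  have hoff : (2*(zr - v))^2 + (2*zi)^2 = 4*(v*x) := by linear_combination 4*hcirc
  have hsum : (x+v)^2 + (ia+t)^2 = N^2 := by linear_combination hia2 + hvt - hN2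
  set L := (x+v)*(2*(zr-v)) + (ia+t)*(2*zi) with hLdef
  set R := N * (2*Real.sqrt (v*x)) with hRdef
  have hsv : (2*Real.sqrt (v*x))^2 = 4*(v*x) := by
    rw [mul_pow, Real.sq_sqrt hvx0]; ring
  have cross : L ≤ R := by
    have hc2 : L^2 ≤ ((x+v)^2+(ia+t)^2) * ((2*(zr-v))^2+(2*zi)^2) := by
      rw [hLdef]; exact cs2 _ _ _ _
    rw [hsum, hoff] at hc2
    have hR2 : R^2 = N^2 * (4*(v*x)) := by rw [hRdef, mul_pow, hsv]
    have hR0 : 0 ≤ R := by positivity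
    calc L ≤ |L| := le_abs_self L
      _ = Real.sqrt (L^2) := (Real.sqrt_sq_eq_abs L).symm
      _ ≤ Real.sqrt (R^2) := Real.sqrt_le_sqrt (by rw [hR2]; exact hc2)
      _ = R := Real.sqrt_sq hR0
  have step1 : (x - v + 2*zr)^2 + (ia + t + 2*zi)^2 ≤ (N + 2*Real.sqrt (v*x))^2 := by
    have expand : (x - v + 2*zr)^2 + (ia + t + 2*zi)^2 = N^2 + 2*L + 4*(v*x) := by
      rw [hLdef]; linear_combination hsum + hoff
    rw [expand]
    have : (N + 2*Real.sqrt (v*x))^2 = N^2 + 2*R + 4*(v*x) := by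
      rw [hRdef]; linear_combination hsv
    rw [this]
    linarith [cross]
  have step2 : N + 2*Real.sqrt (v*x) = (Real.sqrt (a*A) + Real.sqrt (b*B))^2 := by
    have h1 : Real.sqrt (v*x) = Real.sqrt (a*A) * Real.sqrt (b*B) := by
      rw [← Real.sqrt_mul (mul_nonneg ha0 hA0), ← hab, ← hAB]; ring_nf
    have h2 : Real.sqrt (a*A)^2 = a*A := Real.sq_sqrt (mul_nonneg ha0 hA0)
    have h3 : Real.sqrt (b*B)^2 = b*B := Real.sq_sqrt (mul_nonneg hb0 hB0)
    rw [h1]; linear_combination -h2 - h3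
  have hAB2 : A^2 + B^2 = 2 := by rw [hA2, hB2]; ring
  have ha23 : a^((2:ℝ)/3) = (1+t)^((1:ℝ)/3) := by
    rw [hadef, Real.sqrt_eq_rpow, ← Real.rpow_mul (by linarith : (0:ℝ) ≤ 1+t)]; norm_num
  have hb23 : b^((2:ℝ)/3) = (1-t)^((1:ℝ)/3) := by
    rw [hbdef, Real.sqrt_eq_rpow, ← Real.rpow_mul (by linarith : (0:ℝ) ≤ 1-t)]; norm_num
  have step3 := holder4 a b A B ha0 hb0 hA0 hB0
  rw [hAB2, ha23, hb23] at step3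
  calc (x - v + 2*zr)^2 + (ia + t + 2*zi)^2 ≤ (N + 2*Real.sqrt (v*x))^2 := step1
    _ = (Real.sqrt (a*A) + Real.sqrt (b*B))^4 := by rw [step2]; ring
    _ ≤ ((1+t)^((1:ℝ)/3) + (1-t)^((1:ℝ)/3))^3 * 2 := step3
    _ = 2 * ((1-t)^((1:ℝ)/3) + (1+t)^((1:ℝ)/3))^3 := by ring

lemma real_core (r t x v zr zi ia : ℝ) (hr : 0 < r)
    (ht0 : 0 ≤ t) (ht1 : t ≤ 1)
    (hx0 : 0 ≤ x) (hv0 : 0 ≤ v)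
    (hvt : v^2 + t^2*r^4 = r^4)
    (hia : 0 ≤ ia) (hia2 : ia^2 = r^4 - x^2)
    (hzi : 0 ≤ zi)
    (hcirc : zr^2 + zi^2 = v * (x - v + 2*zr))
    (hP : 0 ≤ x - v + 2*zr) :
    (x - v + 2*zr)^2 + (ia + t*r^2 + 2*zi)^2 ≤
      2 * r^4 * ((1-t)^((1:ℝ)/3) + (1+t)^((1:ℝ)/3))^3 := by
  have hr2 : (0:ℝ) < r^2 := by positivity
  have hr4 : (0:ℝ) < r^4 := by positivity
  have hrne : (r:ℝ) ≠ 0 := ne_of_gt hr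
  have h := real_core1 t (x/r^2) (v/r^2) (zr/r^2) (zi/r^2) (ia/r^2)
    ht0 ht1 (by positivity) (by positivity)
    (by field_simp; linear_combination hvt)
    (by positivity)
    (by field_simp; linear_combination hia2)
    (by positivity)
    (by field_simp; linear_combination hcirc)
    (by
      have : x/r^2 - v/r^2 + 2*(zr/r^2) = (x - v + 2*zr)/r^2 := by ring
      rw [this]; positivity)
  have key : (x - v + 2*zr)^2 + (ia + t*r^2 + 2*zi)^2 =
      r^4 * ((x/r^2 - v/r^2 + 2*(zr/r^2))^2 + (ia/r^2 + t + 2*(zi/r^2))^2) := by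
    field_simp
  rw [key]
  calc r^4 * ((x/r^2 - v/r^2 + 2*(zr/r^2))^2 + (ia/r^2 + t + 2*(zi/r^2))^2)
      ≤ r^4 * (2 * ((1-t)^((1:ℝ)/3) + (1+t)^((1:ℝ)/3))^3) :=
        mul_le_mul_of_nonneg_left h (le_of_lt hr4)
    _ = 2 * r^4 * ((1-t)^((1:ℝ)/3) + (1+t)^((1:ℝ)/3))^3 := by ring

lemma norm_sq_split (q : ℍ) : ‖q‖^2 = q.re^2 + ‖q.im‖^2 := by
  rw [sq, ← Quaternion.normSq_eq_norm_mul_self, sq ‖q.im‖, ← Quaternion.normSq_eq_norm_mul_self]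
  simp only [Quaternion.normSq_def', Quaternion.re_im, Quaternion.imI_im, Quaternion.imJ_im,
    Quaternion.imK_im]
  ring

lemma im_eq_self (q : ℍ) (h : q.re = 0) : q.im = q := by
  conv_rhs => rw [← Quaternion.re_add_im q]
  rw [h]
  simp

lemma key (r t : ℝ) (hr : 0 < r) (ht0 : 0 ≤ t) (ht1 : t ≤ 1) (ζc vc ξ w : ℍ)
    (hvc : vc.re = 0) (hw : w.re = 0)
    (hnvc : ‖vc‖ = t * r^2)
    (hgauge : ‖ζc‖^4 + ‖vc‖^2 = r^4)
    (hcyg : cygan ξ w ζc vc = r) :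
    cygan ξ w 0 0 ≤
      2^((1:ℝ)/4) * r * ((1-t)^((1:ℝ)/3)+(1+t)^((1:ℝ)/3))^((3:ℝ)/4) := by
  set A : ℍ := ((‖ξ - ζc‖ ^ 2 : ℝ) : ℍ) + w - vc - 2 * (star ζc * ξ).im with hA
  have hAnorm : ‖A‖ = r^2 := by
    have h1 : Real.sqrt ‖A‖ = r := hcyg
    have h2 := Real.sq_sqrt (norm_nonneg A)
    rw [h1] at h2
    linarith
  set x : ℝ := ‖ξ - ζc‖^2 with hx
  set y : ℝ := ‖ζc‖ with hy
  set z : ℍ := star ζc * ξ with hz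
  set zr : ℝ := z.re with hzr
  set zi : ℝ := ‖z.im‖ with hzi
  set ia : ℝ := ‖A.im‖ with hia
  have hx0 : 0 ≤ x := by positivity
  have hAre : A.re = x := by
    rw [hA, two_mul]
    simp [Quaternion.re_coe, Quaternion.re_im, hw, hvc]
  have hia2 : ia^2 = r^4 - x^2 := by
    have h1 : ‖A‖^2 = A.re^2 + ‖A.im‖^2 := norm_sq_split A
    rw [hAnorm, hAre] at h1
    rw [hia]
    nlinarith [h1]
  have F3 : ‖ξ‖^2 = x - y^2 + 2*zr := by
    have n1 : ‖ξ‖^2 = Quaternion.normSq ξ := by rw [sq, ← Quaternion.normSq_eq_norm_mul_self]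
    have n2 : x = Quaternion.normSq (ξ - ζc) := by
      rw [hx, sq, ← Quaternion.normSq_eq_norm_mul_self]
    have n3 : y^2 = Quaternion.normSq ζc := by
      rw [hy, sq, ← Quaternion.normSq_eq_norm_mul_self]
    have e : Quaternion.normSq ξ =
        Quaternion.normSq (ξ - ζc) - Quaternion.normSq ζc + 2*(star ζc * ξ).re := by
      simp only [Quaternion.normSq_def', Quaternion.re_sub, Quaternion.imI_sub,
        Quaternion.imJ_sub, Quaternion.imK_sub, Quaternion.re_mul, Quaternion.re_star,
        Quaternion.imI_star, Quaternion.imJ_star, Quaternion.imK_star]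
      ring
    rw [n1, n2, n3, hzr, hz]
    linarith [e]
  have hcirc : zr^2 + zi^2 = y^2 * (x - y^2 + 2*zr) := by
    have h1 : ‖z‖^2 = zr^2 + zi^2 := norm_sq_split z
    have h2 : ‖z‖ = y * ‖ξ‖ := by rw [hz, hy, norm_mul, Quaternion.norm_star]
    rw [← h1, h2, mul_pow, F3]
  have hAim : A.im = w - vc - (z.im + z.im) := by
    rw [hA, two_mul]
    simp [Quaternion.im_coe, Quaternion.im_idem, im_eq_self w hw, im_eq_self vc hvc]
  have hw_eq : w = A.im + vc + (z.im + z.im) := by rw [hAim]; abel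
  have hwle : ‖w‖ ≤ ia + t*r^2 + 2*zi := by
    calc ‖w‖ = ‖A.im + vc + (z.im + z.im)‖ := by rw [← hw_eq]
      _ ≤ ‖A.im‖ + ‖vc‖ + ‖z.im + z.im‖ := norm_add₃_le
      _ ≤ ia + t*r^2 + (zi + zi) := by
          refine add_le_add (add_le_add ?_ ?_) ?_
          · exact le_of_eq rfl
          · rw [hnvc]
          · exact norm_add_le _ _
      _ = ia + t*r^2 + 2*zi := by ring
  have hvt : (y^2)^2 + t^2*r^4 = r^4 := by
    have h1 : ‖vc‖^2 = t^2*r^4 := by rw [hnvc]; ring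
    linear_combination hgauge - h1
  have hP : 0 ≤ x - y^2 + 2*zr := by rw [← F3]; positivity
  have main := real_core r t x (y^2) zr zi ia hr ht0 ht1 hx0 (by positivity) hvt
    (norm_nonneg _) hia2 (norm_nonneg _) hcirc hP
  -- now the goal
  set M : ℝ := (1-t)^((1:ℝ)/3)+(1+t)^((1:ℝ)/3) with hM
  have hM0 : 0 ≤ M := add_nonneg (Real.rpow_nonneg (by linarith) _)
    (Real.rpow_nonneg (by linarith) _)
  set RHS : ℝ := 2^((1:ℝ)/4) * r * M^((3:ℝ)/4) with hRHS
  have hRHS0 : 0 ≤ RHS := by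
    apply mul_nonneg (mul_nonneg _ hr.le) (Real.rpow_nonneg hM0 _)
    exact (Real.rpow_pos_of_pos two_pos _).le
  have hRHS4 : RHS^4 = 2 * r^4 * M^3 := by
    have e1 : ((2:ℝ)^((1:ℝ)/4))^(4:ℕ) = 2 := by
      rw [← Real.rpow_natCast ((2:ℝ)^((1:ℝ)/4)) 4, ← Real.rpow_mul (by norm_num : (0:ℝ) ≤ 2)]
      norm_num
    have e2 : (M^((3:ℝ)/4))^(4:ℕ) = M^(3:ℕ) := by
      rw [← Real.rpow_natCast (M^((3:ℝ)/4)) 4, ← Real.rpow_mul hM0, ← Real.rpow_natCast M 3]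
      norm_num
    calc RHS^4 = ((2:ℝ)^((1:ℝ)/4))^(4:ℕ) * r^4 * (M^((3:ℝ)/4))^(4:ℕ) := by rw [hRHS]; ring
      _ = 2 * r^4 * M^3 := by rw [e1, e2]
  show Real.sqrt ‖((‖ξ - 0‖ ^ 2 : ℝ) : ℍ) + w - 0 - 2 * (star 0 * ξ).im‖ ≤ RHS
  have hD : ((‖ξ - 0‖ ^ 2 : ℝ) : ℍ) + w - 0 - 2 * (star 0 * ξ).im = ((‖ξ‖^2 : ℝ) : ℍ) + w := by
    simp
  rw [hD]
  set D : ℍ := ((‖ξ‖^2 : ℝ) : ℍ) + w with hDdef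
  have hDre : D.re = ‖ξ‖^2 := by rw [hDdef, Quaternion.re_add, Quaternion.re_coe, hw, add_zero]
  have hDim : D.im = w := by rw [hDdef, Quaternion.im_add, Quaternion.im_coe, im_eq_self w hw, zero_add]
  have hD2 : ‖D‖^2 = (‖ξ‖^2)^2 + ‖w‖^2 := by rw [norm_sq_split D, hDre, hDim]
  have hfinal : ‖D‖^2 ≤ 2 * r^4 * M^3 := by
    calc ‖D‖^2 = (x - y^2 + 2*zr)^2 + ‖w‖^2 := by rw [hD2, F3]
      _ ≤ (x - y^2 + 2*zr)^2 + (ia + t*r^2 + 2*zi)^2 := by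
          have := pow_le_pow_left₀ (norm_nonneg w) hwle 2
          linarith
      _ ≤ 2 * r^4 * M^3 := main
  have hDle : ‖D‖ ≤ RHS^2 := by
    have h4 : ‖D‖^2 ≤ (RHS^2)^2 := by
      calc ‖D‖^2 ≤ 2 * r^4 * M^3 := hfinal
        _ = RHS^4 := hRHS4.symm
        _ = (RHS^2)^2 := by ring
    calc ‖D‖ = Real.sqrt (‖D‖^2) := (Real.sqrt_sq (norm_nonneg D)).symm
      _ ≤ Real.sqrt ((RHS^2)^2) := Real.sqrt_le_sqrt h4
      _ = RHS^2 := Real.sqrt_sq (by positivity)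
  calc Real.sqrt ‖D‖ ≤ Real.sqrt (RHS^2) := Real.sqrt_le_sqrt hDle
    _ = RHS := Real.sqrt_sq hRHS0

/-- The isometric spheres of `B` and `B⁻¹` — the Cygan spheres of radius
`1/K(p₁)` centred at `c₊ = (−ζ₁(−|ζ₁|²−v₁)⁻¹, v₁/K⁴)` and
`c₋ = (ζ₁(−|ζ₁|²+v₁)⁻¹, −v₁/K⁴)` — are contained in the closed Cygan ball of radius
`R₀ = (2^{1/4}/K)·((1−|v₁|/K²)^{1/3}+(1+|v₁|/K²)^{1/3})^{3/4}` about the origin. -/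
theorem isometric_spheres_subset_ball
    (ζ₁ v₁ : ℍ) (hv₁ : v₁.re = 0) (hp₁ : (ζ₁, v₁) ≠ ((0 : ℍ), (0 : ℍ))) :
    ∀ ξ w : ℍ, w.re = 0 →
      (cygan ξ w (-ζ₁ * (-((‖ζ₁‖ ^ 2 : ℝ) : ℍ) - v₁)⁻¹) (((Kor ζ₁ v₁) ^ 4)⁻¹ • v₁) =
          1 / Kor ζ₁ v₁ ∨
        cygan ξ w (ζ₁ * (-((‖ζ₁‖ ^ 2 : ℝ) : ℍ) + v₁)⁻¹) (-(((Kor ζ₁ v₁) ^ 4)⁻¹ • v₁)) =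
          1 / Kor ζ₁ v₁) →
      cygan ξ w 0 0 ≤
        (2 : ℝ) ^ ((1 : ℝ) / 4) / Kor ζ₁ v₁ *
          ((1 - ‖v₁‖ / (Kor ζ₁ v₁) ^ 2) ^ ((1 : ℝ) / 3) +
            (1 + ‖v₁‖ / (Kor ζ₁ v₁) ^ 2) ^ ((1 : ℝ) / 3)) ^ ((3 : ℝ) / 4) := by
  intro ξ w hw hcase
  set K : ℝ := Kor ζ₁ v₁ with hKdef
  have hsum_pos : 0 < ‖ζ₁‖ ^ 4 + ‖v₁‖ ^ 2 := by
    rcases eq_or_ne ζ₁ 0 with h1 | h1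
    · have h2 : v₁ ≠ 0 := by
        intro h2
        exact hp₁ (by rw [h1, h2])
      have : 0 < ‖v₁‖ := norm_pos_iff.mpr h2
      positivity
    · have : 0 < ‖ζ₁‖ := norm_pos_iff.mpr h1
      positivity
  have hK0 : 0 < K := by
    rw [hKdef, Kor]
    exact Real.rpow_pos_of_pos hsum_pos _
  have hKne : K ≠ 0 := ne_of_gt hK0
  have hK4 : K^4 = ‖ζ₁‖ ^ 4 + ‖v₁‖ ^ 2 := by
    rw [hKdef, Kor, ← Real.rpow_natCast ((‖ζ₁‖ ^ 4 + ‖v₁‖ ^ 2) ^ ((1:ℝ)/4)) 4,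
      ← Real.rpow_mul hsum_pos.le]
    norm_num
  set t : ℝ := ‖v₁‖ / K^2 with htdef
  have ht0 : 0 ≤ t := by positivity
  have ht1 : t ≤ 1 := by
    rw [htdef, div_le_one (by positivity)]
    nlinarith [hK4, norm_nonneg v₁, pow_nonneg (norm_nonneg ζ₁) 4, sq_nonneg (K^2 - ‖v₁‖),
      sq_nonneg (K^2 + ‖v₁‖)]
  have hr : (0:ℝ) < 1/K := by positivity
  -- norm of v-center
  have hnvc : ‖((K ^ 4)⁻¹ • v₁ : ℍ)‖ = t * (1/K)^2 := by
    have e : t * (1/K)^2 = (K^4)⁻¹ * ‖v₁‖ := by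
      rw [htdef]
      ring
    rw [norm_smul, Real.norm_eq_abs, abs_of_pos (by positivity), e]
  have hvcre : (((K ^ 4)⁻¹ • v₁ : ℍ)).re = 0 := by
    rw [Quaternion.re_smul, hv₁]
    simp
  rcases hcase with hcyg | hcyg
  · -- case c₊
    set q : ℍ := -((‖ζ₁‖ ^ 2 : ℝ) : ℍ) - v₁ with hq
    have hqre : q.re = -‖ζ₁‖^2 := by
      rw [hq, Quaternion.re_sub, Quaternion.re_neg, Quaternion.re_coe, hv₁, sub_zero]
    have hqim : q.im = -v₁ := by
      rw [hq, Quaternion.im_sub, Quaternion.im_neg, Quaternion.im_coe, im_eq_self v₁ hv₁, neg_zero,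
        zero_sub]
    have hqn2 : ‖q‖^2 = K^4 := by
      rw [norm_sq_split q, hqre, hqim, norm_neg, hK4]
      ring
    have hqn : ‖q‖ = K^2 := by
      have h1 : ‖q‖ = Real.sqrt (‖q‖^2) := (Real.sqrt_sq (norm_nonneg q)).symm
      rw [h1, hqn2, show K^4 = (K^2)^2 by ring, Real.sqrt_sq (by positivity)]
    have hζcn : ‖(-ζ₁ * q⁻¹ : ℍ)‖ = ‖ζ₁‖ / K^2 := by
      rw [norm_mul, norm_neg, norm_inv, hqn, div_eq_mul_inv]
    have hgauge : ‖(-ζ₁ * q⁻¹ : ℍ)‖^4 + ‖((K ^ 4)⁻¹ • v₁ : ℍ)‖^2 = (1/K)^4 := by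
      rw [hζcn, hnvc, htdef]
      field_simp
      linear_combination -hK4
    have := key (1/K) t hr ht0 ht1 (-ζ₁ * q⁻¹) ((K ^ 4)⁻¹ • v₁) ξ w hvcre hw hnvc hgauge hcyg
    calc cygan ξ w 0 0 ≤ 2^((1:ℝ)/4) * (1/K) * ((1-t)^((1:ℝ)/3)+(1+t)^((1:ℝ)/3))^((3:ℝ)/4) :=
        this
      _ = 2^((1:ℝ)/4) / K * ((1-t)^((1:ℝ)/3)+(1+t)^((1:ℝ)/3))^((3:ℝ)/4) := by ring
  · -- case c₋
    set q : ℍ := -((‖ζ₁‖ ^ 2 : ℝ) : ℍ) + v₁ with hq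
    have hqre : q.re = -‖ζ₁‖^2 := by
      rw [hq, Quaternion.re_add, Quaternion.re_neg, Quaternion.re_coe, hv₁, add_zero]
    have hqim : q.im = v₁ := by
      rw [hq, Quaternion.im_add, Quaternion.im_neg, Quaternion.im_coe, im_eq_self v₁ hv₁, neg_zero,
        zero_add]
    have hqn2 : ‖q‖^2 = K^4 := by
      rw [norm_sq_split q, hqre, hqim, hK4]
      ring
    have hqn : ‖q‖ = K^2 := by
      have h1 : ‖q‖ = Real.sqrt (‖q‖^2) := (Real.sqrt_sq (norm_nonneg q)).symm
      rw [h1, hqn2, show K^4 = (K^2)^2 by ring, Real.sqrt_sq (by positivity)]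
    have hζcn : ‖(ζ₁ * q⁻¹ : ℍ)‖ = ‖ζ₁‖ / K^2 := by
      rw [norm_mul, norm_inv, hqn, div_eq_mul_inv]
    have hvcre' : ((-(((K ^ 4)⁻¹ • v₁ : ℍ)))).re = 0 := by
      rw [Quaternion.re_neg, hvcre, neg_zero]
    have hnvc' : ‖(-(((K ^ 4)⁻¹ • v₁ : ℍ)))‖ = t * (1/K)^2 := by rw [norm_neg]; exact hnvc
    have hgauge : ‖(ζ₁ * q⁻¹ : ℍ)‖^4 + ‖(-(((K ^ 4)⁻¹ • v₁ : ℍ)))‖^2 = (1/K)^4 := by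
      rw [hζcn, hnvc', htdef]
      field_simp
      linear_combination -hK4
    have := key (1/K) t hr ht0 ht1 (ζ₁ * q⁻¹) (-(((K ^ 4)⁻¹ • v₁))) ξ w hvcre' hw hnvc' hgauge
      hcyg
    calc cygan ξ w 0 0 ≤ 2^((1:ℝ)/4) * (1/K) * ((1-t)^((1:ℝ)/3)+(1+t)^((1:ℝ)/3))^((3:ℝ)/4) :=
        this
      _ = 2^((1:ℝ)/4) / K * ((1-t)^((1:ℝ)/3)+(1+t)^((1:ℝ)/3))^((3:ℝ)/4) := by ring
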